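/- Let (W, x, y) ∈ C(y₀) for some parameter vector y₀ ∈ ℝ^K. Then for every k ∈ {1,…,K}, the original SINR constraint of the sum-rate problem holds: log(1 + Re(Tr(H_k W_k)) / (Σ_{i≠k} Re(Tr(H_k W_i)) + σ²)) ≥ x_k. In other words, every feasible point of the linearized (inner-approximated) problem P2(y₀) is feasible for the original semidefinite-relaxed sum-rate problem. -/

import Mathlib

open scoped ComplexOrder


private lemma trace_mul_psd_nonneg' {M : ℕ} {A B : Matrix (Fin M) (Fin M) ℂ}
    (hA : A.PosSemidef) (hB : B.PosSemidef) : 0 ≤ ((A * B).trace).re := by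
  open scoped MatrixOrder in
  obtain ⟨C, rfl⟩ := CStarAlgebra.nonneg_iff_eq_star_mul_self.mp hA.nonneg
  have h2 : (star C * C * B).trace = (C * B * C.conjTranspose).trace := by
    rw [Matrix.star_eq_conjTranspose, Matrix.mul_assoc, Matrix.trace_mul_comm, Matrix.mul_assoc]
  have : 0 ≤ (C * B * C.conjTranspose).trace := (hB.mul_mul_conjTranspose_same C).trace_nonneg
  rw [h2]
  exact (Complex.le_def.mp this).1

/-- Every feasible point of the linearized (inner-approximated) problem `P2(y₀)`
is feasible for the original semidefinite-relaxed sum-rate problem: the SINR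
constraint `log(1 + SINR_k) ≥ x_k` holds for every user `k`. -/
theorem feasible_linearized_implies_feasible_original
    {K M : ℕ} (hK : 1 ≤ K) (hM : 1 ≤ M)
    (H : Fin K → Matrix (Fin M) (Fin M) ℂ) (hH : ∀ k, (H k).PosSemidef)
    (σ2 P : ℝ) (hσ2 : 0 < σ2) (hP : 0 < P) (c : Fin K → ℝ) (y₀ : Fin K → ℝ)
    (W : Fin K → Matrix (Fin M) (Fin M) ℂ) (x y : Fin K → ℝ)
    (hW : ∀ k, (W k).PosSemidef)
    (h1 : ∀ k, x k + y k ≤ Real.log (σ2 + ∑ i, ((H k * W i).trace).re))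
    (h2 : ∀ k, c k ≤ x k)
    (h3 : ∑ k, ((W k).trace).re ≤ P)
    (h4 : ∀ k, σ2 + ∑ i ∈ Finset.univ.erase k, ((H k * W i).trace).re
            ≤ Real.exp (y₀ k) * (y k - y₀ k + 1)) :
    ∀ k, x k ≤ Real.log (1 + ((H k * W k).trace).re /
        (∑ i ∈ Finset.univ.erase k, ((H k * W i).trace).re + σ2)) := by
  intro k
  set S := ((H k * W k).trace).re with hSdef
  set I := ∑ i ∈ Finset.univ.erase k, ((H k * W i).trace).re with hIdef
  have hSnn : 0 ≤ S := trace_mul_psd_nonneg' (hH k) (hW k)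
  have hInn : 0 ≤ I := Finset.sum_nonneg fun i _ => trace_mul_psd_nonneg' (hH k) (hW i)
  have hIpos : 0 < σ2 + I := by linarith
  have hT : (∑ i, ((H k * W i).trace).re) = S + I := by
    rw [hSdef, hIdef]; exact (Finset.add_sum_erase _ _ (Finset.mem_univ k)).symm
  -- y k bounds the log of the interference-plus-noise
  have hylog : Real.log (σ2 + I) ≤ y k := by
    have hle : σ2 + I ≤ Real.exp (y k) := by
      calc σ2 + I ≤ Real.exp (y₀ k) * (y k - y₀ k + 1) := h4 k
        _ ≤ Real.exp (y₀ k) * Real.exp (y k - y₀ k) := by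
            have := Real.add_one_le_exp (y k - y₀ k)
            nlinarith [Real.exp_pos (y₀ k)]
        _ = Real.exp (y k) := by rw [← Real.exp_add]; ring_nf
    calc Real.log (σ2 + I) ≤ Real.log (Real.exp (y k)) :=
          Real.log_le_log hIpos hle
      _ = y k := Real.log_exp _
  have hx : x k ≤ Real.log (σ2 + (S + I)) - Real.log (σ2 + I) := by
    have := h1 k
    rw [hT] at this
    linarith
  have heq : Real.log (σ2 + (S + I)) - Real.log (σ2 + I)
      = Real.log (1 + S / (I + σ2)) := by
    rw [← Real.log_div (by linarith) (ne_of_gt hIpos)]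
    congr 1
    field_simp
    ring
  rw [heq] at hx
  exact hx
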